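/- arXiv:1709.01404 — 5 statements merged into one kernel-verified Lean document; each statement's English description precedes it below -/
import Mathlib

section
/- Let I = [0,1] and let V be the Volterra operator Vf(t) = ∫₀ᵗ f(s) ds, defined on L¹₀(I) = {f ∈ L¹(I) : ∫₀¹ f = 0}, mapping into C(I). Then the operator norm of V : L¹₀(I) → C(I) equals 1/2. -/
open MeasureTheory

lemma volterra_aux_split (f : ℝ → ℝ) (hf : IntegrableOn f (Set.Ioc 0 1))
    (t : ℝ) (ht : t ∈ Set.Icc (0:ℝ) 1) :
    (∫ s in Set.Ioc (0:ℝ) 1, f s)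
      = (∫ s in Set.Ioc (0:ℝ) t, f s) + (∫ s in Set.Ioc t 1, f s) := by
  rw [← setIntegral_union]
  · rw [Set.Ioc_union_Ioc_eq_Ioc ht.1 ht.2]
  · exact Set.Ioc_disjoint_Ioc_of_le le_rfl
  · exact measurableSet_Ioc
  · exact hf.mono_set (Set.Ioc_subset_Ioc le_rfl ht.2)
  · exact hf.mono_set (Set.Ioc_subset_Ioc ht.1 le_rfl)

lemma volterra_aux_ub :
    (1/2 : ℝ) ∈ upperBounds {r : ℝ | ∃ f : ℝ → ℝ, IntegrableOn f (Set.Ioc 0 1) ∧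
        (∫ s in Set.Ioc (0:ℝ) 1, f s) = 0 ∧ (∫ s in Set.Ioc (0:ℝ) 1, |f s|) ≤ 1 ∧
        ∃ t ∈ Set.Icc (0:ℝ) 1, r = |∫ s in Set.Ioc (0:ℝ) t, f s|} := by
  rintro r ⟨f, hf, hzero, habs, t, ht, rfl⟩
  have h1 : IntegrableOn f (Set.Ioc 0 t) :=
    hf.mono_set (Set.Ioc_subset_Ioc le_rfl ht.2)
  have h2 : IntegrableOn f (Set.Ioc t 1) :=
    hf.mono_set (Set.Ioc_subset_Ioc ht.1 le_rfl)
  set A := ∫ s in Set.Ioc (0:ℝ) t, f s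
  set B := ∫ s in Set.Ioc t 1, f s
  have hAB : A + B = 0 := by rw [← volterra_aux_split f hf t ht]; exact hzero
  have hA : |A| ≤ ∫ s in Set.Ioc (0:ℝ) t, |f s| := by
    simpa [Real.norm_eq_abs] using norm_integral_le_integral_norm (μ := volume.restrict (Set.Ioc (0:ℝ) t)) f
  have hB : |B| ≤ ∫ s in Set.Ioc t 1, |f s| := by
    simpa [Real.norm_eq_abs] using norm_integral_le_integral_norm (μ := volume.restrict (Set.Ioc t 1)) f
  have hsum : (∫ s in Set.Ioc (0:ℝ) t, |f s|) + (∫ s in Set.Ioc t 1, |f s|)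
      = ∫ s in Set.Ioc (0:ℝ) 1, |f s| :=
    (volterra_aux_split (fun s => |f s|) hf.abs t ht).symm
  have hBA : |B| = |A| := by
    have : B = -A := by linarith
    rw [this, abs_neg]
  linarith

lemma volterra_aux_integrable :
    IntegrableOn (fun s : ℝ => if s ≤ 1/2 then (1:ℝ) else -1) (Set.Ioc (0:ℝ) 1) := by
  have hg : Integrable (fun _ : ℝ => (1:ℝ)) (volume.restrict (Set.Ioc (0:ℝ) 1)) :=
    integrable_const 1
  apply hg.mono'
  · apply Measurable.aestronglyMeasurable
    exact Measurable.ite (measurableSet_le measurable_id measurable_const)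
      measurable_const measurable_const
  · filter_upwards with s
    rcases le_or_gt s (1/2) with h | h
    · rw [Real.norm_eq_abs, if_pos h]; norm_num
    · rw [Real.norm_eq_abs, if_neg (not_le.mpr h)]; norm_num

lemma volterra_aux_half :
    (∫ s in Set.Ioc (0:ℝ) (1/2), if s ≤ 1/2 then (1:ℝ) else -1) = 1/2 := by
  have e1 : (∫ s in Set.Ioc (0:ℝ) (1/2), if s ≤ 1/2 then (1:ℝ) else -1)
      = ∫ _ in Set.Ioc (0:ℝ) (1/2), (1:ℝ) := by
    apply setIntegral_congr_fun measurableSet_Ioc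
    intro s hs
    simp only
    rw [if_pos hs.2]
  rw [e1, setIntegral_const]
  simp [Real.volume_Ioc]

lemma volterra_aux_mem :
    (1/2 : ℝ) ∈ {r : ℝ | ∃ f : ℝ → ℝ, IntegrableOn f (Set.Ioc 0 1) ∧
        (∫ s in Set.Ioc (0:ℝ) 1, f s) = 0 ∧ (∫ s in Set.Ioc (0:ℝ) 1, |f s|) ≤ 1 ∧
        ∃ t ∈ Set.Icc (0:ℝ) 1, r = |∫ s in Set.Ioc (0:ℝ) t, f s|} := by
  refine ⟨fun s => if s ≤ 1/2 then 1 else -1, volterra_aux_integrable, ?_, ?_, 1/2, ?_, ?_⟩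
  · rw [volterra_aux_split _ volterra_aux_integrable (1/2) (by norm_num)]
    have e2 : (∫ s in Set.Ioc (1/2:ℝ) 1, if s ≤ 1/2 then (1:ℝ) else -1)
        = ∫ _ in Set.Ioc (1/2:ℝ) 1, (-1:ℝ) := by
      apply setIntegral_congr_fun measurableSet_Ioc
      intro s hs
      simp only
      rw [if_neg (not_le.mpr hs.1)]
    rw [volterra_aux_half, e2, setIntegral_const]
    simp [Real.volume_Ioc]
    norm_num
  · have e : (∫ s in Set.Ioc (0:ℝ) 1, |if s ≤ 1/2 then (1:ℝ) else -1|)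
        = ∫ _ in Set.Ioc (0:ℝ) 1, (1:ℝ) := by
      apply setIntegral_congr_fun measurableSet_Ioc
      intro s _
      simp only
      rcases le_or_gt s (1/2) with h | h
      · rw [if_pos h]; norm_num
      · rw [if_neg (not_le.mpr h)]; norm_num
    rw [e, setIntegral_const]
    simp [Real.volume_Ioc]
  · norm_num
  · rw [volterra_aux_half, abs_of_nonneg] <;> norm_num

/-- The operator norm of the Volterra operator `V f (t) = ∫₀ᵗ f`, acting from
`L¹₀(0,1) = {f ∈ L¹(0,1) : ∫₀¹ f = 0}` into `C[0,1]`, equals `1/2`.  The operator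
norm is expressed as the least upper bound of all values `|V f (t)|` over functions
`f` in the unit ball of `L¹₀(0,1)` and points `t ∈ [0,1]`. -/
theorem volterra_opNorm_eq_half :
    IsLUB {r : ℝ | ∃ f : ℝ → ℝ, IntegrableOn f (Set.Ioc 0 1) ∧
        (∫ s in Set.Ioc (0:ℝ) 1, f s) = 0 ∧ (∫ s in Set.Ioc (0:ℝ) 1, |f s|) ≤ 1 ∧
        ∃ t ∈ Set.Icc (0:ℝ) 1, r = |∫ s in Set.Ioc (0:ℝ) t, f s|}
      (1/2) := by
  exact ⟨volterra_aux_ub, fun ub hub => hub volterra_aux_mem⟩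
end

section
/- Let V : L¹₀(0,1) → C[0,1] be the operator Vf(t) = ∫₀ᵗ f. For every n ∈ ℕ, the n-th isomorphism number satisfies iₙ(V) ≥ 1/(2n). Concretely, there exist bounded linear maps B : ℓ^∞_n → L¹₀(0,1) with ‖B‖ ≤ 2n and A : C[0,1] → ℓ^∞_n with ‖A‖ ≤ 1 such that A ∘ V ∘ B is the identity on ℓ^∞_n. -/
open MeasureTheory

noncomputable def muI : Measure ℝ := volume.restrict (Set.Ioc (0:ℝ) 1)

instance : NullSingletonClass muI := by unfold muI; infer_instance

open Set in
lemma aux_vol_full {a b t : ℝ} (c : ℝ) (hab : a ≤ b) (h0 : 0 ≤ a) (hbt : b ≤ t) :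
    ∫ s in Ioc (0:ℝ) t, (Ioc a b).indicator (fun _ => c) s = c * (b - a) := by
  rw [integral_indicator measurableSet_Ioc, Measure.restrict_restrict measurableSet_Ioc,
    Set.inter_eq_left.mpr (Ioc_subset_Ioc h0 hbt), setIntegral_const, measureReal_def, Real.volume_Ioc,
    ENNReal.toReal_ofReal (by linarith), smul_eq_mul, mul_comm]

open Set in
lemma aux_vol_empty {a t : ℝ} (b c : ℝ) (hta : t ≤ a) :
    ∫ s in Ioc (0:ℝ) t, (Ioc a b).indicator (fun _ => c) s = 0 := by
  rw [integral_indicator measurableSet_Ioc, Measure.restrict_restrict measurableSet_Ioc]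
  have h : Ioc a b ∩ Ioc 0 t = ∅ := by
    ext x
    simp only [mem_inter_iff, mem_Ioc, mem_empty_iff_false, iff_false, not_and]
    intro h1 h2 h3
    linarith [h1.1, h1.2]
  rw [h, Measure.restrict_empty, integral_zero_measure]

lemma muI_restrict {t : ℝ} (ht : t ≤ 1) :
    muI.restrict (Set.Ioc 0 t) = volume.restrict (Set.Ioc 0 t) := by
  rw [muI, Measure.restrict_restrict measurableSet_Ioc,
    Set.inter_eq_left.mpr (Set.Ioc_subset_Ioc le_rfl ht)]

lemma Lp_coeFn_sum {ι : Type*} (s : Finset ι) (f : ι → Lp ℝ 1 muI) :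
    ⇑(∑ i ∈ s, f i) =ᵐ[muI] fun x => ∑ i ∈ s, f i x := by
  classical
  induction s using Finset.induction with
  | empty =>
    simp only [Finset.sum_empty]
    exact (Lp.coeFn_zero ℝ 1 muI).trans (Filter.EventuallyEq.of_eq rfl)
  | @insert a s h ih =>
    rw [Finset.sum_insert h]
    filter_upwards [Lp.coeFn_add (f a) (∑ i ∈ s, f i), ih] with x h1 h2
    simp only [h1, Pi.add_apply, h2, Finset.sum_insert h]

/-- `L¹₀(0,1)`: the subspace of `L¹(0,1)` consisting of functions with zero integral. -/
noncomputable def L10 : Submodule ℝ (Lp ℝ 1 muI) where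
  carrier := {f | ∫ x, f x ∂muI = 0}
  zero_mem' := by
    simp only [Set.mem_setOf_eq]
    rw [integral_congr_ae (Lp.coeFn_zero ℝ 1 muI)]
    simp
  add_mem' := by
    intro f g hf hg
    simp only [Set.mem_setOf_eq] at *
    rw [integral_congr_ae (Lp.coeFn_add f g)]
    simp only [Pi.add_apply]
    rw [integral_add (L1.integrable_coeFn f) (L1.integrable_coeFn g), hf, hg, add_zero]
  smul_mem' := by
    intro c f hf
    simp only [Set.mem_setOf_eq] at *
    rw [integral_congr_ae (Lp.coeFn_smul c f)]
    simp only [Pi.smul_apply]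
    rw [integral_smul, hf, smul_zero]

/-- The sup norm of the Volterra primitive `V f` over `[0,1]`. -/
noncomputable def supV (f : Lp ℝ 1 muI) : ℝ :=
  ⨆ t : Set.Icc (0:ℝ) 1, |∫ s in Set.Ioc (0:ℝ) t.1, f s ∂muI|


/-- Isomorphism number lower bound `iₙ(V) ≥ 1/(2n)` for the Volterra operator
`V : L¹₀(0,1) → C[0,1]`, in concrete form: there exist bounded linear maps
`B : ℓ^∞_n → L¹₀(0,1)` with `‖B‖ ≤ 2n` and `A : C[0,1] → ℓ^∞_n` with `‖A‖ ≤ 1`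
such that `A ∘ V ∘ B` is the identity on `ℓ^∞_n`. -/
theorem isomorphism_lower_bound (n : ℕ) (hn : 0 < n) :
    ∃ (A : C(Set.Icc (0:ℝ) 1, ℝ) →L[ℝ] (Fin n → ℝ))
      (B : (Fin n → ℝ) →L[ℝ] Lp ℝ 1 muI),
      ‖A‖ ≤ 1 ∧ ‖B‖ ≤ 2 * n ∧ (∀ y, B y ∈ L10) ∧
      ∀ y : Fin n → ℝ, ∃ g : C(Set.Icc (0:ℝ) 1, ℝ),
        (∀ t : Set.Icc (0:ℝ) 1, g t = ∫ s in Set.Ioc (0:ℝ) t.1, (B y : ℝ → ℝ) s ∂muI) ∧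
        A g = y := by

  classical
  have hN : (0:ℝ) < n := by exact_mod_cast hn
  set aa : Fin n → ℝ := fun i => (i:ℝ) / n with haa
  set mm : Fin n → ℝ := fun i => (2 * (i:ℝ) + 1) / (2 * n) with hmm
  set bb : Fin n → ℝ := fun i => ((i:ℝ) + 1) / n with hbb
  have hi1 : ∀ i : Fin n, (i:ℝ) + 1 ≤ n := by
    intro i; exact_mod_cast Nat.succ_le_of_lt i.2
  have hma : ∀ i, mm i - aa i = 1 / (2 * n) := by
    intro i; simp only [haa, hmm]; field_simp; ring
  have hbm : ∀ i, bb i - mm i = 1 / (2 * n) := by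
    intro i; simp only [hbb, hmm]; field_simp; ring
  have h0a : ∀ i, 0 ≤ aa i := fun i => by positivity
  have hhalf : (0:ℝ) < 1 / (2*n) := by positivity
  have ham : ∀ i, aa i ≤ mm i := by
    intro i; linarith [hma i]
  have hmb : ∀ i, mm i ≤ bb i := by
    intro i; linarith [hbm i]
  have hb1 : ∀ i, bb i ≤ 1 := fun i => by
    rw [hbb, div_le_one hN]; exact hi1 i
  have hm1 : ∀ i, mm i ≤ 1 := fun i => (hmb i).trans (hb1 i)
  have h0m : ∀ i, 0 ≤ mm i := fun i => (h0a i).trans (ham i)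
  have hba : ∀ i j : Fin n, (i:ℕ) < (j:ℕ) → bb i ≤ aa j := by
    intro i j hij
    rw [hbb, haa, div_le_div_iff_of_pos_right hN]
    exact_mod_cast hij
  -- measure facts
  have hmuI : ∀ p q : ℝ, 0 ≤ p → q ≤ 1 → muI (Set.Ioc p q) = ENNReal.ofReal (q - p) := by
    intro p q h0 h1
    rw [muI, Measure.restrict_apply measurableSet_Ioc,
      Set.inter_eq_left.mpr (Set.Ioc_subset_Ioc h0 h1), Real.volume_Ioc]
  have hne : ∀ (p q : ℝ), 0 ≤ p → q ≤ 1 → muI (Set.Ioc p q) ≠ ⊤ := by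
    intro p q h0 h1; rw [hmuI p q h0 h1]; exact ENNReal.ofReal_ne_top
  -- the Lp building blocks
  set F : Fin n → Lp ℝ 1 muI := fun i =>
    indicatorConstLp 1 measurableSet_Ioc (hne _ _ (h0a i) (hm1 i)) ((2*(n:ℝ)))
      - indicatorConstLp 1 measurableSet_Ioc (hne _ _ (h0m i) (hb1 i)) ((2*(n:ℝ))) with hF
  have hFnorm : ∀ i, ‖F i‖ ≤ 2 := by
    intro i
    have e1 : ‖indicatorConstLp 1 measurableSet_Ioc (hne _ _ (h0a i) (hm1 i)) ((2*(n:ℝ)))‖ = 1 := by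
      rw [norm_indicatorConstLp one_ne_zero ENNReal.one_ne_top, measureReal_def, hmuI _ _ (h0a i) (hm1 i), hma i,
        ENNReal.toReal_ofReal (by positivity)]
      simp only [ENNReal.toReal_one, div_one, Real.rpow_one, Real.norm_eq_abs]
      rw [abs_of_pos (by positivity)]
      field_simp
    have e2 : ‖indicatorConstLp 1 measurableSet_Ioc (hne _ _ (h0m i) (hb1 i)) ((2*(n:ℝ)))‖ = 1 := by
      rw [norm_indicatorConstLp one_ne_zero ENNReal.one_ne_top, measureReal_def, hmuI _ _ (h0m i) (hb1 i), hbm i,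
        ENNReal.toReal_ofReal (by positivity)]
      simp only [ENNReal.toReal_one, div_one, Real.rpow_one, Real.norm_eq_abs]
      rw [abs_of_pos (by positivity)]
      field_simp
    calc ‖F i‖ ≤ _ + _ := norm_sub_le _ _
    _ ≤ 2 := by rw [e1, e2]; norm_num
  have hFcoe : ∀ i, ⇑(F i) =ᵐ[muI] fun s =>
      (Set.Ioc (aa i) (mm i)).indicator (fun _ => (2*(n:ℝ))) s
        - (Set.Ioc (mm i) (bb i)).indicator (fun _ => (2*(n:ℝ))) s := by
    intro i
    filter_upwards [Lp.coeFn_sub (indicatorConstLp 1 measurableSet_Ioc (hne _ _ (h0a i) (hm1 i)) ((2*(n:ℝ))))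
      (indicatorConstLp 1 measurableSet_Ioc (hne _ _ (h0m i) (hb1 i)) ((2*(n:ℝ)))),
      indicatorConstLp_coeFn (p := 1) (hs := measurableSet_Ioc (a := aa i) (b := mm i))
        (hμs := hne _ _ (h0a i) (hm1 i)) (c := (2*(n:ℝ))),
      indicatorConstLp_coeFn (p := 1) (hs := measurableSet_Ioc (a := mm i) (b := bb i))
        (hμs := hne _ _ (h0m i) (hb1 i)) (c := (2*(n:ℝ)))] with x h1 h2 h3
    simp only [hF]
    rw [h1, Pi.sub_apply, h2, h3]
  -- the operator B
  set B : (Fin n → ℝ) →L[ℝ] Lp ℝ 1 muI :=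
    ∑ i, (ContinuousLinearMap.proj (R := ℝ) (φ := fun _ : Fin n => ℝ) i).smulRight (F i) with hB
  have hBy : ∀ y, B y = ∑ i, y i • F i := by
    intro y
    rw [hB]
    simp [ContinuousLinearMap.sum_apply, ContinuousLinearMap.smulRight_apply]
  have hBnorm : ‖B‖ ≤ 2 * n := by
    refine ContinuousLinearMap.opNorm_le_bound _ (by positivity) fun y => ?_
    calc ‖B y‖ = ‖∑ i, y i • F i‖ := by rw [hBy]
    _ ≤ ∑ i, ‖y i • F i‖ := norm_sum_le _ _
    _ ≤ ∑ _i : Fin n, ‖y‖ * 2 := by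
        refine Finset.sum_le_sum fun i _ => ?_
        rw [norm_smul]
        exact mul_le_mul (norm_le_pi_norm y i) (hFnorm i) (norm_nonneg _) (norm_nonneg _)
    _ = 2 * n * ‖y‖ := by
        rw [Finset.sum_const, Finset.card_univ, Fintype.card_fin, nsmul_eq_mul]; ring
  -- pointwise representation of B y
  have hrep : ∀ y : Fin n → ℝ, ⇑(B y) =ᵐ[muI] fun s => ∑ i, y i *
      ((Set.Ioc (aa i) (mm i)).indicator (fun _ => (2*(n:ℝ))) s
        - (Set.Ioc (mm i) (bb i)).indicator (fun _ => (2*(n:ℝ))) s) := by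
    intro y
    rw [hBy]
    refine (Lp_coeFn_sum Finset.univ _).trans ?_
    have h1 : ∀ i : Fin n, ⇑(y i • F i) =ᵐ[muI] fun s => y i *
        ((Set.Ioc (aa i) (mm i)).indicator (fun _ => (2*(n:ℝ))) s
          - (Set.Ioc (mm i) (bb i)).indicator (fun _ => (2*(n:ℝ))) s) := by
      intro i
      filter_upwards [Lp.coeFn_smul (y i) (F i), hFcoe i] with x hx1 hx2
      rw [hx1, Pi.smul_apply, hx2, smul_eq_mul]
    have h2 : ∀ᵐ x ∂muI, ∀ i : Fin n, (y i • F i) x = y i *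
        ((Set.Ioc (aa i) (mm i)).indicator (fun _ => (2*(n:ℝ))) x
          - (Set.Ioc (mm i) (bb i)).indicator (fun _ => (2*(n:ℝ))) x) :=
      (MeasureTheory.ae_all_iff).mpr h1
    filter_upwards [h2] with x hx
    exact Finset.sum_congr rfl fun i _ => hx i
  -- integrability of indicators with respect to restricted measures
  have hInt : ∀ (p q c : ℝ) (μ' : Measure ℝ), μ' ≤ muI →
      Integrable ((Set.Ioc p q).indicator fun _ => c) μ' := by
    intro p q c μ' hle
    rw [integrable_indicator_iff measurableSet_Ioc]
    refine (integrableOn_const_iff).mpr (Or.inr ?_)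
    calc μ' (Set.Ioc p q) ≤ muI (Set.Ioc p q) := hle _
    _ ≤ muI Set.univ := measure_mono (Set.subset_univ _)
    _ < ⊤ := by
        rw [muI, Measure.restrict_apply_univ, Real.volume_Ioc]
        exact ENNReal.ofReal_lt_top
  have hint_full : ∀ (p q c : ℝ), p ≤ q → 0 ≤ p → q ≤ 1 →
      ∫ x, (Set.Ioc p q).indicator (fun _ => c) x ∂muI = c * (q - p) := by
    intro p q c hpq hp hq
    rw [muI]
    exact aux_vol_full c hpq hp hq
  have hIm : ∀ (p q c : ℝ), Integrable ((Set.Ioc p q).indicator fun _ => c) muI :=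
    fun p q c => hInt p q c muI le_rfl
  have hsummand : ∀ (μ' : Measure ℝ), μ' ≤ muI → ∀ (y : Fin n → ℝ) (i : Fin n),
      Integrable (fun a => y i * ((Set.Ioc (aa i) (mm i)).indicator (fun _ => (2*(n:ℝ))) a
        - (Set.Ioc (mm i) (bb i)).indicator (fun _ => (2*(n:ℝ))) a)) μ' := by
    intro μ' h y i
    exact ((hInt _ _ _ μ' h).sub (hInt _ _ _ μ' h)).const_mul (y i)
  have hmemL10 : ∀ y, B y ∈ L10 := by
    intro y
    show ∫ x, (B y) x ∂muI = 0
    rw [integral_congr_ae (hrep y),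
      integral_finset_sum _ (fun i _ => hsummand muI le_rfl y i)]
    refine Finset.sum_eq_zero fun i _ => ?_
    rw [integral_const_mul, integral_sub (hIm _ _ _) (hIm _ _ _),
      hint_full _ _ _ (ham i) (h0a i) (hm1 i), hint_full _ _ _ (hmb i) (h0m i) (hb1 i),
      hma i, hbm i]
    ring
  -- the key computation
  have key : ∀ (y : Fin n → ℝ) (j : Fin n),
      ∫ s in Set.Ioc (0:ℝ) (mm j), (B y) s ∂muI = y j := by
    intro y j
    rw [integral_congr_ae ((hrep y).restrict (s := Set.Ioc 0 (mm j))),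
      muI_restrict (hm1 j)]
    have hle : volume.restrict (Set.Ioc 0 (mm j)) ≤ muI := by
      rw [← muI_restrict (hm1 j)]; exact Measure.restrict_le_self
    have hIi : ∀ (p q c : ℝ), Integrable ((Set.Ioc p q).indicator fun _ => c)
        (volume.restrict (Set.Ioc 0 (mm j))) := fun p q c => hInt p q c _ hle
    rw [integral_finset_sum _ (fun i _ => hsummand _ hle y i)]
    rw [Finset.sum_eq_single j]
    · rw [integral_const_mul, integral_sub (hIi _ _ _) (hIi _ _ _),
        aux_vol_full _ (ham j) (h0a j) le_rfl, aux_vol_empty _ _ le_rfl, hma j]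
      field_simp
      ring
    · intro i _ hij
      rw [integral_const_mul, integral_sub (hIi _ _ _) (hIi _ _ _)]
      rcases hij.lt_or_gt with hlt | hlt
      · have h1 : bb i ≤ mm j := (hba i j hlt).trans (ham j)
        have h2 : mm i ≤ mm j := (hmb i).trans h1
        rw [aux_vol_full _ (ham i) (h0a i) h2, aux_vol_full _ (hmb i) (h0m i) h1,
          hma i, hbm i]
        ring
      · have h1 : mm j ≤ aa i := (hmb j).trans (hba j i hlt)
        have h2 : mm j ≤ mm i := h1.trans (ham i)
        rw [aux_vol_empty _ _ h1, aux_vol_empty _ _ h2]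
        ring
    · intro hj
      exact absurd (Finset.mem_univ j) hj
  -- the operator A
  have hmempt : ∀ i : Fin n, mm i ∈ Set.Icc (0:ℝ) 1 := fun i => ⟨h0m i, hm1 i⟩
  set A_lin : C(Set.Icc (0:ℝ) 1, ℝ) →ₗ[ℝ] (Fin n → ℝ) :=
    { toFun := fun g => fun i => g ⟨mm i, hmempt i⟩
      map_add' := fun g h => by ext i; simp
      map_smul' := fun c g => by ext i; simp } with hAlin
  have hAbound : ∀ g, ‖A_lin g‖ ≤ 1 * ‖g‖ := by
    intro g
    rw [one_mul]
    refine (pi_norm_le_iff_of_nonneg (norm_nonneg g)).mpr fun i => ?_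
    exact ContinuousMap.norm_coe_le_norm g _
  refine ⟨A_lin.mkContinuous 1 hAbound, B,
    LinearMap.mkContinuous_norm_le _ zero_le_one _, hBnorm, hmemL10, ?_⟩
  intro y
  have hcont : Continuous fun b : ℝ => ∫ x in (0:ℝ)..b, (B y) x ∂muI :=
    (L1.integrable_coeFn (B y)).continuous_primitive 0
  refine ⟨⟨fun t => ∫ x in (0:ℝ)..(t:ℝ), (B y) x ∂muI, hcont.comp continuous_subtype_val⟩,
    fun t => intervalIntegral.integral_of_le t.2.1, ?_⟩
  funext i
  rw [LinearMap.mkContinuous_apply]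
  show (∫ x in (0:ℝ)..(mm i), (B y) x ∂muI) = y i
  rw [intervalIntegral.integral_of_le (h0m i)]
  exact key y i
end

section
/- Let V : L¹₀(0,1) → C[0,1] be the operator Vf(t) = ∫₀ᵗ f. For every n ∈ ℕ, the n-th Gelfand number satisfies cₙ(V) ≥ 1/2. Equivalently, whenever m < n, ρ > 0, and φ₁,…,φ_m are continuous linear functionals on L¹₀(0,1) such that ‖Vf‖_∞ ≤ max_k |φ_k(f)| + ρ‖f‖₁ for all f ∈ L¹₀(0,1), then ρ ≥ 1/2. -/
open MeasureTheory Set Filter Topology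

instance : IsFiniteMeasure muI := by
  constructor
  rw [muI, Measure.restrict_apply_univ, Real.volume_Ioc]
  simp

/-- Indicator of `Ioc a b` as an element of `L¹(muI)`. -/
noncomputable def eI (a b : ℝ) : Lp ℝ 1 muI :=
  indicatorConstLp 1 (measurableSet_Ioc : MeasurableSet (Set.Ioc a b)) (measure_ne_top muI _) (1:ℝ)

lemma muI_Ioc {a b : ℝ} (h0 : 0 ≤ a) (hb : b ≤ 1) :
    muI (Set.Ioc a b) = ENNReal.ofReal (b - a) := by
  rw [muI, Measure.restrict_apply measurableSet_Ioc,
    Set.inter_eq_left.mpr (Set.Ioc_subset_Ioc h0 hb), Real.volume_Ioc]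

lemma norm_eI (a b : ℝ) : ‖eI a b‖ = (muI (Set.Ioc a b)).toReal := by
  rw [eI, norm_indicatorConstLp one_ne_zero ENNReal.one_ne_top]
  simp
  rfl

lemma norm_eI_le {a b : ℝ} (hab : a ≤ b) : ‖eI a b‖ ≤ b - a := by
  rw [norm_eI]
  have h1 : muI (Set.Ioc a b) ≤ ENNReal.ofReal (b - a) := by
    rw [← Real.volume_Ioc, muI, Measure.restrict_apply measurableSet_Ioc]
    exact measure_mono Set.inter_subset_left
  calc (muI (Set.Ioc a b)).toReal ≤ (ENNReal.ofReal (b - a)).toReal :=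
        ENNReal.toReal_mono ENNReal.ofReal_ne_top h1
    _ = b - a := ENNReal.toReal_ofReal (by linarith)

lemma eI_split {a b c : ℝ} (hab : a ≤ b) (hbc : b ≤ c) :
    eI a c = eI a b + eI b c := by
  have hd : Disjoint (Set.Ioc a b) (Set.Ioc b c) := Set.Ioc_disjoint_Ioc_of_le le_rfl
  have hu : Set.Ioc a b ∪ Set.Ioc b c = Set.Ioc a c := Set.Ioc_union_Ioc_eq_Ioc hab hbc
  rw [eI, eI, eI, ← indicatorConstLp_disjoint_union measurableSet_Ioc measurableSet_Ioc
    (measure_ne_top muI _) (measure_ne_top muI _) hd (1:ℝ)]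
  apply (indicatorConstLp_inj _ _ _ _ one_ne_zero).mpr
  rw [hu]
  exact Filter.EventuallyEq.rfl

/-- The spike function `ε⁻¹ (1_{(t,t+ε]} - 1_{(t+ε,t+2ε]})`. -/
noncomputable def spk (t ε : ℝ) : Lp ℝ 1 muI :=
  ε⁻¹ • (eI t (t + ε) - eI (t + ε) (t + 2*ε))

lemma spk_coe (t ε : ℝ) :
    ⇑(spk t ε) =ᵐ[muI] fun x => ε⁻¹ * ((Set.Ioc t (t+ε)).indicator (fun _ => (1:ℝ)) x
      - (Set.Ioc (t+ε) (t+2*ε)).indicator (fun _ => (1:ℝ)) x) := by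
  filter_upwards [Lp.coeFn_smul ε⁻¹ (eI t (t + ε) - eI (t + ε) (t + 2*ε)),
    Lp.coeFn_sub (eI t (t + ε)) (eI (t + ε) (t + 2*ε)),
    (indicatorConstLp_coeFn : ⇑(eI t (t+ε)) =ᵐ[muI] _),
    (indicatorConstLp_coeFn : ⇑(eI (t+ε) (t+2*ε)) =ᵐ[muI] _)] with x h1 h2 h3 h4
  rw [spk, h1]
  simp only [Pi.smul_apply, smul_eq_mul, h2, Pi.sub_apply]
  simp only [eI] at h3 h4 ⊢
  rw [h3, h4]

lemma norm_spk_le {t ε : ℝ} (hε : 0 < ε) : ‖spk t ε‖ ≤ 2 := by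
  have h1 := norm_eI_le (by linarith : t ≤ t + ε)
  have h2 := norm_eI_le (by linarith : t + ε ≤ t + 2*ε)
  calc ‖spk t ε‖ = ‖ε⁻¹‖ * ‖eI t (t + ε) - eI (t + ε) (t + 2*ε)‖ := norm_smul _ _
    _ ≤ ε⁻¹ * (‖eI t (t + ε)‖ + ‖eI (t + ε) (t + 2*ε)‖) := by
        rw [Real.norm_eq_abs, abs_of_pos (by positivity)]
        exact mul_le_mul_of_nonneg_left (norm_sub_le _ _) (by positivity)
    _ ≤ ε⁻¹ * (ε + ε) := by
        apply mul_le_mul_of_nonneg_left _ (by positivity)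
        have : t + ε - t = ε := by ring
        have h2' : t + 2*ε - (t + ε) = ε := by ring
        linarith [h1, h2]
    _ = 2 := by field_simp; ring

lemma spk_mem_L10 {t ε : ℝ} (ht : 0 ≤ t) (hε : 0 < ε) (h1 : t + 2*ε ≤ 1) :
    ∫ x, (spk t ε) x ∂muI = 0 := by
  rw [integral_congr_ae (spk_coe t ε)]
  rw [integral_const_mul]
  have hia : Integrable ((Set.Ioc t (t+ε)).indicator (fun _ => (1:ℝ))) muI := by
    apply IntegrableOn.integrable_indicator _ measurableSet_Ioc
    exact (integrableOn_const_iff).mpr (Or.inr (measure_lt_top _ _))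
  have hib : Integrable ((Set.Ioc (t+ε) (t+2*ε)).indicator (fun _ => (1:ℝ))) muI := by
    apply IntegrableOn.integrable_indicator _ measurableSet_Ioc
    exact (integrableOn_const_iff).mpr (Or.inr (measure_lt_top _ _))
  rw [integral_sub hia hib, integral_indicator_const _ measurableSet_Ioc,
    integral_indicator_const _ measurableSet_Ioc, measureReal_def, measureReal_def,
    muI_Ioc (by linarith) (by linarith), muI_Ioc (by linarith) (by linarith)]
  simp only [smul_eq_mul, mul_one]
  have : t + ε - t = ε := by ring
  have h2 : t + 2*ε - (t + ε) = ε := by ring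
  rw [this, h2, sub_self, mul_zero]

lemma spk_intV {t ε : ℝ} (ht : 0 ≤ t) (hε : 0 < ε) (h1 : t + 2*ε ≤ 1) :
    ∫ s in Set.Ioc (0:ℝ) (t+ε), (spk t ε) s ∂muI = 1 := by
  rw [setIntegral_congr_ae measurableSet_Ioc
    ((spk_coe t ε).mono fun x hx _ => hx)]
  rw [integral_const_mul]
  have hia : IntegrableOn ((Set.Ioc t (t+ε)).indicator (fun _ => (1:ℝ)))
      (Set.Ioc (0:ℝ) (t+ε)) muI := by
    apply Integrable.integrableOn
    apply IntegrableOn.integrable_indicator _ measurableSet_Ioc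
    exact (integrableOn_const_iff).mpr (Or.inr (measure_lt_top _ _))
  have hib : IntegrableOn ((Set.Ioc (t+ε) (t+2*ε)).indicator (fun _ => (1:ℝ)))
      (Set.Ioc (0:ℝ) (t+ε)) muI := by
    apply Integrable.integrableOn
    apply IntegrableOn.integrable_indicator _ measurableSet_Ioc
    exact (integrableOn_const_iff).mpr (Or.inr (measure_lt_top _ _))
  rw [integral_sub hia hib,
    setIntegral_indicator measurableSet_Ioc, setIntegral_indicator measurableSet_Ioc]
  have e1 : Set.Ioc (0:ℝ) (t+ε) ∩ Set.Ioc t (t+ε) = Set.Ioc t (t+ε) := by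
    apply Set.inter_eq_right.mpr
    exact Set.Ioc_subset_Ioc ht le_rfl
  have e2 : Set.Ioc (0:ℝ) (t+ε) ∩ Set.Ioc (t+ε) (t+2*ε) = ∅ := by
    apply Set.eq_empty_of_forall_notMem
    rintro x ⟨⟨_, hx2⟩, ⟨hx3, _⟩⟩
    linarith
  rw [e1, e2]
  simp only [setIntegral_empty, sub_zero]
  rw [setIntegral_const, measureReal_def, muI_Ioc (by linarith) (by linarith)]
  have : t + ε - t = ε := by ring
  rw [this]
  simp [ENNReal.toReal_ofReal hε.le]
  field_simp

lemma abs_setIntegral_le (f : Lp ℝ 1 muI) (u : ℝ) :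
    |∫ s in Set.Ioc (0:ℝ) u, f s ∂muI| ≤ ‖f‖ := by
  rw [L1.norm_eq_integral_norm]
  calc |∫ s in Set.Ioc (0:ℝ) u, f s ∂muI| ≤ ∫ s in Set.Ioc (0:ℝ) u, ‖f s‖ ∂muI := by
        rw [← Real.norm_eq_abs]
        exact norm_integral_le_integral_norm _
    _ ≤ ∫ s, ‖f s‖ ∂muI :=
        setIntegral_le_integral (L1.integrable_coeFn f).norm
          (Eventually.of_forall fun x => norm_nonneg _)

lemma lipG (ψ : Lp ℝ 1 muI →L[ℝ] ℝ) : LipschitzWith ‖ψ‖₊ (fun s => ψ (eI 0 s)) := by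
  have aux : ∀ s s' : ℝ, s ≤ s' → ‖eI 0 s' - eI 0 s‖ ≤ s' - s := by
    intro s s' hss'
    have hz : ∀ u : ℝ, u ≤ 0 → eI 0 u = 0 := by
      intro u hu
      rw [← norm_eq_zero, norm_eI, Set.Ioc_eq_empty (by linarith : ¬ (0:ℝ) < u),
        measure_empty]
      simp
    rcases le_or_gt 0 s with hs | hs
    · have := eI_split hs hss'
      have : eI 0 s' - eI 0 s = eI s s' := by rw [this]; abel
      rw [this]
      exact norm_eI_le hss'
    · rw [hz s hs.le, sub_zero]
      rcases le_or_gt s' 0 with hs' | hs'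
      · rw [hz s' hs']; simp; linarith
      · calc ‖eI 0 s'‖ ≤ s' - 0 := norm_eI_le hs'.le
          _ ≤ s' - s := by linarith
  apply LipschitzWith.of_dist_le_mul
  intro x y
  have key : ∀ x y : ℝ, x ≤ y → dist (ψ (eI 0 x)) (ψ (eI 0 y)) ≤ ‖ψ‖ * (y - x) := by
    intro x y hxy
    rw [dist_eq_norm, ← map_sub]
    calc ‖ψ (eI 0 x - eI 0 y)‖ ≤ ‖ψ‖ * ‖eI 0 x - eI 0 y‖ := ψ.le_opNorm _
      _ ≤ ‖ψ‖ * (y - x) := by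
          apply mul_le_mul_of_nonneg_left _ (norm_nonneg ψ)
          rw [norm_sub_rev]
          exact aux x y hxy
  rcases le_total x y with hxy | hxy
  · calc dist (ψ (eI 0 x)) (ψ (eI 0 y)) ≤ ‖ψ‖ * (y - x) := key x y hxy
      _ ≤ ‖ψ‖₊ * dist x y := by
        rw [coe_nnnorm, Real.dist_eq]
        exact mul_le_mul_of_nonneg_left (by rw [abs_sub_comm]; exact le_abs_self _)
          (norm_nonneg ψ)
  · calc dist (ψ (eI 0 x)) (ψ (eI 0 y)) = dist (ψ (eI 0 y)) (ψ (eI 0 x)) := dist_comm _ _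
      _ ≤ ‖ψ‖ * (x - y) := key y x hxy
      _ ≤ ‖ψ‖₊ * dist x y := by
        rw [coe_nnnorm, Real.dist_eq]
        exact mul_le_mul_of_nonneg_left (le_abs_self _) (norm_nonneg ψ)

lemma tendsto_psi_spk (ψ : Lp ℝ 1 muI →L[ℝ] ℝ) {t : ℝ} (ht : 0 ≤ t)
    (hd : DifferentiableAt ℝ (fun s => ψ (eI 0 s)) t) :
    Tendsto (fun ε => ψ (spk t ε)) (𝓝[>] (0:ℝ)) (𝓝 0) := by
  set G := fun s => ψ (eI 0 s) with hG
  set d := deriv G t with hdd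
  have key : ∀ ε : ℝ, 0 < ε →
      ψ (spk t ε) = 2*((G (t+ε) - G t)/ε) - (G (t+2*ε) - G t)/ε := by
    intro ε hε
    have s1 : eI 0 (t+ε) = eI 0 t + eI t (t+ε) := eI_split ht (by linarith)
    have s2 : eI 0 (t+2*ε) = eI 0 (t+ε) + eI (t+ε) (t+2*ε) :=
      eI_split (by linarith) (by linarith)
    have d1 : eI t (t+ε) = eI 0 (t+ε) - eI 0 t := by rw [s1]; abel
    have d2 : eI (t+ε) (t+2*ε) = eI 0 (t+2*ε) - eI 0 (t+ε) := by rw [s2]; abel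
    rw [spk, _root_.map_smul, map_sub, d1, d2, map_sub, map_sub, smul_eq_mul]
    show ε⁻¹ * ((G (t+ε) - G t) - (G (t+2*ε) - G (t+ε))) = _
    field_simp
    ring
  have hA : Tendsto (fun ε => (G (t+ε) - G t)/ε) (𝓝[≠] (0:ℝ)) (𝓝 d) := by
    have := hd.hasDerivAt.tendsto_slope_zero
    simpa [smul_eq_mul, div_eq_inv_mul] using this
  have h2ε : Tendsto (fun ε : ℝ => 2*ε) (𝓝[≠] (0:ℝ)) (𝓝[≠] (0:ℝ)) := by
    rw [tendsto_nhdsWithin_iff]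
    constructor
    · have : Tendsto (fun ε : ℝ => 2*ε) (𝓝 0) (𝓝 (2*0)) :=
        (continuous_const.mul continuous_id).tendsto 0
      simpa using this.mono_left nhdsWithin_le_nhds
    · filter_upwards [self_mem_nhdsWithin] with x hx
      simp only [Set.mem_compl_iff, Set.mem_singleton_iff] at hx ⊢
      intro hc
      apply hx
      linarith [hc]
  have hB : Tendsto (fun ε => (G (t+2*ε) - G t)/ε) (𝓝[≠] (0:ℝ)) (𝓝 (2*d)) := by
    have hcomp : Tendsto (fun ε => (G (t+2*ε) - G t)/(2*ε)) (𝓝[≠] (0:ℝ)) (𝓝 d) :=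
      hA.comp h2ε
    have := hcomp.const_mul 2
    apply this.congr'
    filter_upwards [self_mem_nhdsWithin] with x hx
    have hx' : x ≠ 0 := hx
    field_simp
  have total : Tendsto (fun ε => 2*((G (t+ε) - G t)/ε) - (G (t+2*ε) - G t)/ε)
      (𝓝[≠] (0:ℝ)) (𝓝 0) := by
    have := (hA.const_mul 2).sub hB
    simpa using this
  have := total.mono_left (nhdsWithin_mono _ (fun x hx => by
    simp only [Set.mem_compl_iff, Set.mem_singleton_iff]
    exact ne_of_gt hx))
  apply this.congr'
  filter_upwards [self_mem_nhdsWithin] with ε hε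
  exact (key ε hε).symm

/-- Gelfand number lower bound `cₙ(V) ≥ 1/2` for the Volterra operator
`V : L¹₀(0,1) → C[0,1]`, via the functional criterion: whenever `m < n`, `ρ > 0`
and `φ₁, …, φ_m` are continuous linear functionals on `L¹₀(0,1)` such that
`‖Vf‖_∞ ≤ max_k |φ_k f| + ρ ‖f‖₁` for all `f ∈ L¹₀(0,1)`, then `ρ ≥ 1/2`. -/
theorem gelfand_lower_bound (n m : ℕ) (hmn : m < n) (ρ : ℝ) (hρ : 0 < ρ)
    (φ : Fin m → (L10 →L[ℝ] ℝ))
    (h : ∀ f : L10, supV (f : Lp ℝ 1 muI) ≤ (⨆ k : Fin m, |φ k f|) + ρ * ‖f‖) :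
    1/2 ≤ ρ := by
  choose ψ hψ _hn using fun k => exists_extension_norm_eq L10 (φ k)
  have hae : ∀ᵐ t ∂(volume : Measure ℝ),
      ∀ k, DifferentiableAt ℝ (fun s => ψ k (eI 0 s)) t := by
    rw [ae_all_iff]
    intro k
    exact (lipG (ψ k)).ae_differentiableAt
  have hne : (volume.restrict (Set.Ioo (0:ℝ) 1)) ≠ 0 := by
    intro hc
    have h1 : (volume.restrict (Set.Ioo (0:ℝ) 1)) Set.univ = 0 := by rw [hc]; rfl
    rw [Measure.restrict_apply_univ, Real.volume_Ioo] at h1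
    simp at h1
  obtain ⟨t, ⟨httr, hdiff⟩⟩ :
      ∃ t, t ∈ Set.Ioo (0:ℝ) 1 ∧ ∀ k, DifferentiableAt ℝ (fun s => ψ k (eI 0 s)) t := by
    have h2 := (ae_restrict_mem (measurableSet_Ioo :
        MeasurableSet (Set.Ioo (0:ℝ) 1))).and (ae_restrict_of_ae hae)
    exact @Filter.Eventually.exists _ _ _ (ae_neBot.mpr hne) h2
  obtain ⟨ht0, ht1⟩ := httr
  have main : (1:ℝ) ≤ 2*ρ := by
    have key : ∀ δ > 0, (1:ℝ) ≤ δ + 2*ρ := by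
      intro δ hδ
      have e1 : ∀ᶠ ε in 𝓝[>] (0:ℝ), ∀ k, |ψ k (spk t ε)| < δ := by
        rw [eventually_all]
        intro k
        have h1 := tendsto_psi_spk (ψ k) ht0.le (hdiff k)
        have h2 := Metric.tendsto_nhds.mp h1 δ hδ
        filter_upwards [h2] with ε hε
        rwa [Real.dist_eq, sub_zero] at hε
      have e2 : ∀ᶠ ε in 𝓝[>] (0:ℝ), ε < (1-t)/2 := by
        filter_upwards [Ioo_mem_nhdsGT_of_mem
          (⟨le_refl (0:ℝ), by linarith⟩ : (0:ℝ) ∈ Set.Ico (0:ℝ) ((1-t)/2))] with ε hε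
        exact hε.2
      obtain ⟨ε, ⟨hk, hεsmall⟩, hεpos⟩ := ((e1.and e2).and eventually_mem_nhdsWithin).exists
      have hεpos' : (0:ℝ) < ε := hεpos
      have h2e : t + 2*ε ≤ 1 := by linarith
      have hmem : spk t ε ∈ L10 := spk_mem_L10 ht0.le hεpos' h2e
      set f0 : L10 := ⟨spk t ε, hmem⟩ with hf0
      have hsup : (1:ℝ) ≤ supV (spk t ε) := by
        have hb : BddAbove (Set.range fun u : Set.Icc (0:ℝ) 1 =>
            |∫ s in Set.Ioc (0:ℝ) u.1, (spk t ε) s ∂muI|) := by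
          refine ⟨‖spk t ε‖, ?_⟩
          rintro x ⟨u, rfl⟩
          exact abs_setIntegral_le _ _
        have hmem2 : (t+ε) ∈ Set.Icc (0:ℝ) 1 := ⟨by linarith, by linarith⟩
        have h3 := le_ciSup hb (⟨t+ε, hmem2⟩ : Set.Icc (0:ℝ) 1)
        rw [spk_intV ht0.le hεpos' h2e] at h3
        simpa [supV] using h3
      have hin := h f0
      have hφ : (⨆ k, |φ k f0|) ≤ δ := by
        apply Real.iSup_le _ hδ.le
        intro k
        have heq : φ k f0 = ψ k (spk t ε) := (hψ k f0).symm
        rw [heq]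
        exact (hk k).le
      have hnorm : ‖f0‖ ≤ 2 := norm_spk_le hεpos'
      have hc : supV ((f0 : Lp ℝ 1 muI)) = supV (spk t ε) := rfl
      rw [hc] at hin
      have : ρ * ‖f0‖ ≤ ρ * 2 := mul_le_mul_of_nonneg_left hnorm hρ.le
      linarith
    by_contra hcon
    push_neg at hcon
    have := key ((1-2*ρ)/2) (by linarith)
    linarith
  linarith
end

section
/- Let V : L¹₀(0,1) → C[0,1] be the operator Vf(t) = ∫₀ᵗ f. For every f ∈ L¹(0,1) with ∫₀¹ f = 0 and ‖f‖₁ ≤ 1, and every u, v ∈ [0,1], one has |Vf(u) − Vf(v)| ≤ 1/2. Consequently the second Kolmogorov number satisfies d₂(V) ≤ 1/4. -/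
open MeasureTheory

section Helpers
open Set


lemma split_Ioc {f : ℝ → ℝ} {a b c : ℝ} (hab : a ≤ b) (hbc : b ≤ c)
    (h1 : IntegrableOn f (Set.Ioc a b)) (h2 : IntegrableOn f (Set.Ioc b c)) :
    (∫ s in Set.Ioc a c, f s) = (∫ s in Set.Ioc a b, f s) + ∫ s in Set.Ioc b c, f s := by
  rw [← Set.Ioc_union_Ioc_eq_Ioc hab hbc,
    setIntegral_union (Set.Ioc_disjoint_Ioc_of_le le_rfl) measurableSet_Ioc h1 h2]

lemma osc_half (f : ℝ → ℝ) (hf : IntegrableOn f (Set.Ioc 0 1))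
    (h0 : (∫ s in Set.Ioc (0:ℝ) 1, f s) = 0)
    (h1 : (∫ s in Set.Ioc (0:ℝ) 1, |f s|) ≤ 1)
    {u v : ℝ} (hu : 0 ≤ u) (huv : u ≤ v) (hv : v ≤ 1) :
    |(∫ s in Set.Ioc (0:ℝ) u, f s) - ∫ s in Set.Ioc (0:ℝ) v, f s| ≤ 1/2 := by
  have hfa : IntegrableOn (fun s => |f s|) (Set.Ioc 0 1) := hf.abs
  have m1 : Ioc (0:ℝ) u ⊆ Ioc 0 1 := Ioc_subset_Ioc le_rfl (huv.trans hv)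
  have m2 : Ioc u v ⊆ Ioc (0:ℝ) 1 := Ioc_subset_Ioc hu hv
  have m3 : Ioc v (1:ℝ) ⊆ Ioc 0 1 := Ioc_subset_Ioc (hu.trans huv) le_rfl
  have s1 : (∫ s in Set.Ioc (0:ℝ) v, f s)
      = (∫ s in Set.Ioc (0:ℝ) u, f s) + ∫ s in Set.Ioc u v, f s :=
    split_Ioc hu huv (hf.mono_set m1) (hf.mono_set m2)
  have s2 : (∫ s in Set.Ioc (0:ℝ) 1, f s)
      = (∫ s in Set.Ioc (0:ℝ) v, f s) + ∫ s in Set.Ioc v 1, f s :=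
    split_Ioc (hu.trans huv) hv (hf.mono_set (Ioc_subset_Ioc le_rfl hv)) (hf.mono_set m3)
  have t1 : (∫ s in Set.Ioc (0:ℝ) v, |f s|)
      = (∫ s in Set.Ioc (0:ℝ) u, |f s|) + ∫ s in Set.Ioc u v, |f s| :=
    split_Ioc hu huv (hfa.mono_set m1) (hfa.mono_set m2)
  have t2 : (∫ s in Set.Ioc (0:ℝ) 1, |f s|)
      = (∫ s in Set.Ioc (0:ℝ) v, |f s|) + ∫ s in Set.Ioc v 1, |f s| :=
    split_Ioc (hu.trans huv) hv (hfa.mono_set (Ioc_subset_Ioc le_rfl hv)) (hfa.mono_set m3)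
  have ba : |∫ s in Set.Ioc u v, f s| ≤ ∫ s in Set.Ioc u v, |f s| := by
    simpa [Real.norm_eq_abs] using
      norm_integral_le_integral_norm (μ := volume.restrict (Set.Ioc u v)) f
  have aa : |∫ s in Set.Ioc (0:ℝ) u, f s| ≤ ∫ s in Set.Ioc (0:ℝ) u, |f s| := by
    simpa [Real.norm_eq_abs] using
      norm_integral_le_integral_norm (μ := volume.restrict (Set.Ioc (0:ℝ) u)) f
  have ca : |∫ s in Set.Ioc v (1:ℝ), f s| ≤ ∫ s in Set.Ioc v (1:ℝ), |f s| := by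
    simpa [Real.norm_eq_abs] using
      norm_integral_le_integral_norm (μ := volume.restrict (Set.Ioc v (1:ℝ))) f
  set a := ∫ s in Set.Ioc (0:ℝ) u, f s
  set b := ∫ s in Set.Ioc u v, f s
  set c := ∫ s in Set.Ioc v (1:ℝ), f s
  have hb : b = -(a + c) := by rw [s1] at s2; linarith [h0 ▸ s2]
  have key : |a - (a + b)| = |b| := by rw [sub_add_eq_sub_sub, sub_self, zero_sub, abs_neg]
  rw [← s1] at *
  rw [key]
  have h2 : |b| ≤ |a| + |c| := by rw [hb, abs_neg]; exact abs_add_le a c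
  have habs : (∫ s in Set.Ioc (0:ℝ) u, |f s|) + (∫ s in Set.Ioc u v, |f s|)
      + (∫ s in Set.Ioc v (1:ℝ), |f s|) ≤ 1 := by rw [t1] at t2; linarith
  linarith

end Helpers

/-- (a) For every `f ∈ L¹(0,1)` with `∫₀¹ f = 0` and `‖f‖₁ ≤ 1` and all
`u, v ∈ [0,1]`, one has `|Vf(u) − Vf(v)| ≤ 1/2`.  (b) Consequently the second
Kolmogorov number of `V : L¹₀(0,1) → C[0,1]` satisfies `d₂(V) ≤ 1/4`: there is a
subspace `N` of `C[0,1]` of dimension `< 2` such that every `f` in the unit ball of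
`L¹₀` satisfies `dist_{C[0,1]}(Vf, N) ≤ 1/4`. -/
theorem oscillation_bound_and_d2_le_quarter :
    (∀ f : ℝ → ℝ, IntegrableOn f (Set.Ioc 0 1) → (∫ s in Set.Ioc (0:ℝ) 1, f s) = 0 →
      (∫ s in Set.Ioc (0:ℝ) 1, |f s|) ≤ 1 → ∀ u ∈ Set.Icc (0:ℝ) 1, ∀ v ∈ Set.Icc (0:ℝ) 1,
      |(∫ s in Set.Ioc (0:ℝ) u, f s) - ∫ s in Set.Ioc (0:ℝ) v, f s| ≤ 1/2) ∧
    (∃ N : Submodule ℝ C(Set.Icc (0:ℝ) 1, ℝ), Module.finrank ℝ N < 2 ∧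
      ∀ f ∈ L10, ‖f‖ ≤ 1 → ∀ ε : ℝ, 0 < ε → ∃ g ∈ N,
        (⨆ t : Set.Icc (0:ℝ) 1,
          |(∫ x in Set.Ioc (0:ℝ) t.1, (f : ℝ → ℝ) x ∂muI) - g t|) ≤ 1/4 + ε) := by
  constructor
  · intro f hf h0 h1 u hu v hv
    rcases le_total u v with h | h
    · exact osc_half f hf h0 h1 hu.1 h hv.2
    · rw [abs_sub_comm]
      exact osc_half f hf h0 h1 hv.1 h hu.2
  · refine ⟨Submodule.span ℝ {(1 : C(Set.Icc (0:ℝ) 1, ℝ))}, ?_, ?_⟩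
    · have hone : (1 : C(Set.Icc (0:ℝ) 1, ℝ)) ≠ 0 := by
        intro h
        have := ContinuousMap.congr_fun h ⟨0, le_rfl, zero_le_one⟩
        simp at this
      rw [finrank_span_singleton hone]
      norm_num
    · intro f hfmem hfnorm ε hε
      haveI : Nonempty (Set.Icc (0:ℝ) 1) := ⟨⟨0, le_rfl, zero_le_one⟩⟩
      set f' : ℝ → ℝ := (f : ℝ → ℝ) with hf'
      have hint : IntegrableOn f' (Set.Ioc 0 1) := L1.integrable_coeFn f
      have h0 : (∫ s in Set.Ioc (0:ℝ) 1, f' s) = 0 := hfmem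
      have h1 : (∫ s in Set.Ioc (0:ℝ) 1, |f' s|) ≤ 1 := by
        have hn : ‖f‖ = ∫ x, ‖f' x‖ ∂muI := L1.norm_eq_integral_norm f
        simp only [Real.norm_eq_abs] at hn
        have : (∫ s in Set.Ioc (0:ℝ) 1, |f' s|) = ∫ x, |f' x| ∂muI := rfl
        rw [this, ← hn]
        exact hfnorm
      set W : Set.Icc (0:ℝ) 1 → ℝ := fun t => ∫ x in Set.Ioc (0:ℝ) t.1, f' x with hW
      have hWmu : ∀ t : Set.Icc (0:ℝ) 1,
          (∫ x in Set.Ioc (0:ℝ) t.1, f' x ∂muI) = W t := by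
        intro t
        simp only [muI, hW]
        rw [Measure.restrict_restrict measurableSet_Ioc, Set.Ioc_inter_Ioc, max_self,
          min_eq_left t.2.2]
      have hWbd : ∀ t, W t ≤ 1 := by
        intro t
        have habs : |W t| ≤ ∫ x in Set.Ioc (0:ℝ) t.1, |f' x| := by
          simpa [Real.norm_eq_abs] using
            norm_integral_le_integral_norm (μ := volume.restrict (Set.Ioc (0:ℝ) t.1)) f'
        have hmono : (∫ x in Set.Ioc (0:ℝ) t.1, |f' x|) ≤ ∫ x in Set.Ioc (0:ℝ) 1, |f' x| := by
          apply setIntegral_mono_set hint.abs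
          · filter_upwards with x using abs_nonneg _
          · exact HasSubset.Subset.eventuallyLE (Set.Ioc_subset_Ioc le_rfl t.2.2)
        exact le_trans (le_abs_self _) (le_trans habs (le_trans hmono h1))
      have hbdd : BddAbove (Set.range W) := by
        refine ⟨1, ?_⟩
        rintro _ ⟨t, rfl⟩
        exact hWbd t
      obtain ⟨t₁, ht₁⟩ : ∃ t₁, (⨆ t, W t) - ε < W t₁ :=
        exists_lt_of_lt_ciSup (sub_lt_self (⨆ t, W t) hε)
      set c : ℝ := W t₁ - 1/4 with hc
      refine ⟨c • (1 : C(Set.Icc (0:ℝ) 1, ℝ)),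
        Submodule.smul_mem _ c (Submodule.mem_span_singleton_self _), ?_⟩
      apply ciSup_le
      intro t
      have hg : (c • (1 : C(Set.Icc (0:ℝ) 1, ℝ))) t = c := by simp
      rw [hWmu t, hg]
      have hd : |W t - W t₁| ≤ 1/2 := by
        rcases le_total t.1 t₁.1 with h | h
        · exact osc_half f' hint h0 h1 t.2.1 h t₁.2.2
        · rw [abs_sub_comm]
          exact osc_half f' hint h0 h1 t₁.2.1 h t.2.2
      have hup : W t ≤ W t₁ + ε := le_trans (le_ciSup hbdd t) (by linarith)
      have hlo : -(1/2 : ℝ) ≤ W t - W t₁ := (abs_le.mp hd).1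
      rw [abs_le]
      constructor <;> simp only [hc] <;> linarith
end

section
/- Let 1 ≤ q ≤ p < ∞, let f ∈ L^{p,q}(Ω), and let {E_k} be pairwise disjoint measurable subsets of Ω. Then Σ_k ‖f χ_{E_k}‖_{p,q}^p ≤ ‖f‖_{p,q}^p. -/
open MeasureTheory ENNReal

/-- The Lorentz norm `‖f‖_{p,q} = (p ∫₀^∞ μ_f(s)^{q/p} s^{q−1} ds)^{1/q}`, where
`μ_f(s) = μ{x : |f x| > s}` is the distribution function (value in `[0,∞]`). -/
noncomputable def lorentzNorm {α : Type*} [MeasurableSpace α] (μ : Measure α)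
    (p q : ℝ) (f : α → ℝ) : ℝ≥0∞ :=
  (ENNReal.ofReal p *
    ∫⁻ s in Set.Ioi (0:ℝ), (μ {x | s < |f x|}) ^ (q / p) * ENNReal.ofReal (s ^ (q - 1))) ^ (1 / q)

private lemma measurable_ennrpow_const {β : Type*} [MeasurableSpace β] {g : β → ℝ≥0∞}
    (hg : Measurable g) (y : ℝ) : Measurable fun s => g s ^ y :=
  ENNReal.continuous_rpow_const.measurable.comp hg

/-- Reverse Jensen / Hölder: for `0 < θ ≤ 1`,
`∫ w^θ · D ≤ (∫ w · D)^θ · (∫ D)^(1-θ)`. -/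
private lemma lintegral_rpow_mul_le {β : Type*} [MeasurableSpace β] (ρ : Measure β)
    {θ : ℝ} (hθ0 : 0 < θ) (hθ1 : θ ≤ 1) {w D : β → ℝ≥0∞}
    (hw : Measurable w) (hD : Measurable D) :
    ∫⁻ s, w s ^ θ * D s ∂ρ ≤ (∫⁻ s, w s * D s ∂ρ) ^ θ * (∫⁻ s, D s ∂ρ) ^ (1 - θ) := by
  rcases eq_or_lt_of_le hθ1 with h1 | h1
  · subst h1
    simp
  · have hθ1' : (0:ℝ) < 1 - θ := by linarith
    have hconj : Real.HolderConjugate (1/θ) (1/(1-θ)) := by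
      constructor
      · rw [one_div, one_div, inv_inv, inv_inv]; ring
      · positivity
      · positivity
    have key : ∀ s, w s ^ θ * D s = ((w s * D s) ^ θ) * (D s ^ (1 - θ)) := by
      intro s
      rw [ENNReal.mul_rpow_of_nonneg _ _ hθ0.le, mul_assoc,
        ← ENNReal.rpow_add_of_nonneg θ (1 - θ) hθ0.le hθ1'.le]
      norm_num
    calc ∫⁻ s, w s ^ θ * D s ∂ρ
        = ∫⁻ s, ((fun s => (w s * D s) ^ θ) * fun s => D s ^ (1-θ)) s ∂ρ := by
          exact lintegral_congr fun s => key s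
      _ ≤ (∫⁻ s, ((w s * D s) ^ θ) ^ (1/θ) ∂ρ) ^ (1/(1/θ)) *
          (∫⁻ s, (D s ^ (1-θ)) ^ (1/(1-θ)) ∂ρ) ^ (1/(1/(1-θ))) :=
          ENNReal.lintegral_mul_le_Lp_mul_Lq ρ hconj
            (measurable_ennrpow_const (hw.mul hD) θ).aemeasurable
            (measurable_ennrpow_const hD (1-θ)).aemeasurable
      _ = (∫⁻ s, w s * D s ∂ρ) ^ θ * (∫⁻ s, D s ∂ρ) ^ (1 - θ) := by
          rw [one_div_one_div, one_div_one_div]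
          congr 1
          · congr 1
            refine lintegral_congr fun s => ?_
            rw [← ENNReal.rpow_mul, mul_one_div_cancel hθ0.ne', ENNReal.rpow_one]
          · congr 1
            refine lintegral_congr fun s => ?_
            rw [← ENNReal.rpow_mul, mul_one_div_cancel hθ1'.ne', ENNReal.rpow_one]

/-- Summation property of Lorentz norms for `1 ≤ q ≤ p < ∞`: if `f ∈ L^{p,q}(Ω,μ)`
and `(E k)` are pairwise disjoint measurable subsets, then
`Σ_k ‖f χ_{E_k}‖_{p,q}^p ≤ ‖f‖_{p,q}^p`. -/
theorem lorentz_norm_sum_over_disjoint_sets {α : Type*} [MeasurableSpace α]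
    (μ : Measure α) (p q : ℝ) (hq : 1 ≤ q) (hpq : q ≤ p)
    (f : α → ℝ) (hf : Measurable f) (hfin : lorentzNorm μ p q f ≠ ⊤)
    (E : ℕ → Set α) (hE : ∀ k, MeasurableSet (E k))
    (hdisj : Pairwise (Function.onFun Disjoint E)) :
    ∑' k : ℕ, (lorentzNorm μ p q ((E k).indicator f)) ^ p ≤ (lorentzNorm μ p q f) ^ p := by
  classical
  have hq0 : (0:ℝ) < q := lt_of_lt_of_le one_pos hq
  have hp0 : (0:ℝ) < p := lt_of_lt_of_le hq0 hpq
  set θ : ℝ := q / p with hθdef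
  have hθ0 : 0 < θ := div_pos hq0 hp0
  have hθ1 : θ ≤ 1 := by
    rw [hθdef, div_le_one hp0]; exact hpq
  set r : ℝ := p / q with hrdef
  have hr1 : (1:ℝ) ≤ r := by
    rw [hrdef, le_div_iff₀ hq0]; linarith
  have hr0 : (0:ℝ) ≤ r := by linarith
  have hθr : θ * r = 1 := by
    rw [hθdef, hrdef]; field_simp
  -- distribution functions
  set G : ℝ → ℝ≥0∞ := fun s => μ {x | s < |f x|} with hGdef
  have hGanti : Antitone G := fun a b hab =>
    measure_mono fun x hx => lt_of_le_of_lt hab hx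
  have hGm : Measurable G := hGanti.measurable
  set Gk : ℕ → ℝ → ℝ≥0∞ := fun k s => μ (E k ∩ {x | s < |f x|}) with hGkdef
  have hGkanti : ∀ k, Antitone (Gk k) := fun k a b hab =>
    measure_mono (Set.inter_subset_inter_right _ fun x hx => lt_of_le_of_lt hab hx)
  have hGkm : ∀ k, Measurable (Gk k) := fun k => (hGkanti k).measurable
  have hGkle : ∀ k s, Gk k s ≤ G s := fun k s => measure_mono Set.inter_subset_right
  set h : ℕ → ℝ → ℝ≥0∞ := fun k s => Gk k s / G s with hhdef
  have hhm : ∀ k, Measurable (h k) := fun k => (hGkm k).div hGm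
  -- the density
  set D : ℝ → ℝ≥0∞ := fun s => G s ^ θ * ENNReal.ofReal (s ^ (q - 1)) with hDdef
  have hDm : Measurable D :=
    (measurable_ennrpow_const hGm θ).mul
      (ENNReal.measurable_ofReal.comp
        (Real.continuous_rpow_const (by linarith : (0:ℝ) ≤ q - 1)).measurable)
  set J : ℝ≥0∞ := ∫⁻ s in Set.Ioi (0:ℝ), D s with hJdef
  have hLN : lorentzNorm μ p q f = (ENNReal.ofReal p * J) ^ (1 / q) := rfl
  have hJtop : J ≠ ⊤ := by
    intro hJ
    apply hfin
    rw [hLN, hJ, ENNReal.mul_top (by simp [ENNReal.ofReal_eq_zero]; linarith)]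
    exact ENNReal.top_rpow_of_pos (by positivity)
  -- a.e. finiteness of G on (0,∞)
  have haefin : ∀ᵐ s ∂(volume.restrict (Set.Ioi (0:ℝ))), G s ≠ ⊤ := by
    have h1 : ∀ᵐ s ∂(volume.restrict (Set.Ioi (0:ℝ))), D s < ⊤ := ae_lt_top hDm hJtop
    have h2 : ∀ᵐ s ∂(volume.restrict (Set.Ioi (0:ℝ))), s ∈ Set.Ioi (0:ℝ) :=
      ae_restrict_mem measurableSet_Ioi
    filter_upwards [h1, h2] with s hs1 hs2 hGtop
    have hc : ENNReal.ofReal (s ^ (q-1)) ≠ 0 := by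
      simp only [ne_eq, ENNReal.ofReal_eq_zero, not_le]
      exact Real.rpow_pos_of_pos hs2 _
    have hD : D s = ⊤ := by
      rw [hDdef]
      simp only
      rw [hGtop, ENNReal.top_rpow_of_pos hθ0, ENNReal.top_mul hc]
    exact absurd hD hs1.ne
  -- rewrite the distribution function of the indicator
  have hset : ∀ k, ∀ s ∈ Set.Ioi (0:ℝ),
      {x | s < |(E k).indicator f x|} = E k ∩ {x | s < |f x|} := by
    intro k s hs
    ext x
    by_cases hx : x ∈ E k
    · simp [Set.indicator_of_mem hx, hx]
    · simp only [Set.mem_setOf_eq, Set.indicator_of_notMem hx, abs_zero, Set.mem_inter_iff, hx,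
        false_and, iff_false, not_lt]
      exact le_of_lt hs
  -- key pointwise identity
  have hkey : ∀ᵐ s ∂(volume.restrict (Set.Ioi (0:ℝ))), ∀ k,
      Gk k s ^ θ * ENNReal.ofReal (s ^ (q-1)) = h k s ^ θ * D s := by
    filter_upwards [haefin] with s hsfin k
    show Gk k s ^ θ * _ = (Gk k s / G s) ^ θ * (G s ^ θ * _)
    by_cases hG0 : G s = 0
    · have hGk0 : Gk k s = 0 := le_antisymm (hG0 ▸ hGkle k s) zero_le
      simp [hGk0, hG0, ENNReal.zero_rpow_of_pos hθ0]
    · rw [← mul_assoc, ← ENNReal.mul_rpow_of_nonneg _ _ hθ0.le,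
        ENNReal.div_mul_cancel hG0 hsfin]
  have hBk : ∀ k, (∫⁻ s in Set.Ioi (0:ℝ),
      (μ {x | s < |(E k).indicator f x|}) ^ θ * ENNReal.ofReal (s ^ (q-1)))
      = ∫⁻ s in Set.Ioi (0:ℝ), h k s ^ θ * D s := by
    intro k
    rw [setLIntegral_congr_fun measurableSet_Ioi
      (fun s hs => by beta_reduce; rw [hset k s hs] :
        Set.EqOn (fun s => (μ {x | s < |(E k).indicator f x|}) ^ θ * ENNReal.ofReal (s ^ (q-1)))
            (fun s => Gk k s ^ θ * ENNReal.ofReal (s ^ (q-1))) (Set.Ioi (0:ℝ)))]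
    exact lintegral_congr_ae (hkey.mono fun s hs => hs k)
  -- Hölder step
  have hHolder : ∀ k, (∫⁻ s in Set.Ioi (0:ℝ), h k s ^ θ * D s)
      ≤ (∫⁻ s in Set.Ioi (0:ℝ), h k s * D s) ^ θ * J ^ (1 - θ) :=
    fun k => lintegral_rpow_mul_le _ hθ0 hθ1 (hhm k) hDm
  -- summing the linearized integrals
  have hIle : (∑' k : ℕ, ∫⁻ s in Set.Ioi (0:ℝ), h k s * D s) ≤ J := by
    rw [← lintegral_tsum (f := fun k s => h k s * D s) fun k => ((hhm k).mul hDm).aemeasurable]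
    refine le_trans (lintegral_mono fun s => ?_) le_rfl
    have hmeasS : MeasurableSet {x | s < |f x|} :=
      measurableSet_lt measurable_const hf.abs
    have hsumG : (∑' k : ℕ, Gk k s) ≤ G s := by
      rw [hGkdef]
      simp only
      rw [← measure_iUnion
        (fun i j hij => (hdisj hij).mono Set.inter_subset_left Set.inter_subset_left)
        (fun k => (hE k).inter hmeasS)]
      exact measure_mono (Set.iUnion_subset fun k => Set.inter_subset_right)
    have hsumh : (∑' k : ℕ, h k s) ≤ 1 := by
      rw [hhdef]
      simp only [div_eq_mul_inv, ENNReal.tsum_mul_right]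
      calc (∑' k : ℕ, Gk k s) * (G s)⁻¹ ≤ G s * (G s)⁻¹ :=
            mul_le_mul_left hsumG _
        _ ≤ 1 := by rw [← div_eq_mul_inv]; exact ENNReal.div_self_le_one
    calc (∑' k : ℕ, h k s * D s) = (∑' k : ℕ, h k s) * D s := ENNReal.tsum_mul_right
      _ ≤ 1 * D s := mul_le_mul_left hsumh _
      _ = D s := one_mul _
  -- assembling
  have hcr : (0:ℝ) ≤ r := hr0
  have hrr : (1 - θ) * r = r - 1 := by rw [sub_mul, one_mul, hθr]
  calc ∑' k : ℕ, (lorentzNorm μ p q ((E k).indicator f)) ^ p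
      ≤ ∑' k : ℕ, (ENNReal.ofReal p) ^ r *
          ((∫⁻ s in Set.Ioi (0:ℝ), h k s * D s) * J ^ (r - 1)) := by
        refine ENNReal.tsum_le_tsum fun k => ?_
        have e0 : lorentzNorm μ p q ((E k).indicator f)
            = (ENNReal.ofReal p * ∫⁻ s in Set.Ioi (0:ℝ), h k s ^ θ * D s) ^ (1/q) := by
          rw [← hBk k]; rfl
        have e1 : (lorentzNorm μ p q ((E k).indicator f)) ^ p
            = (ENNReal.ofReal p * ∫⁻ s in Set.Ioi (0:ℝ), h k s ^ θ * D s) ^ r := by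
          rw [e0, ← ENNReal.rpow_mul]
          congr 1
          rw [hrdef]; field_simp
        rw [e1]
        calc (ENNReal.ofReal p * ∫⁻ s in Set.Ioi (0:ℝ), h k s ^ θ * D s) ^ r
            ≤ (ENNReal.ofReal p *
                ((∫⁻ s in Set.Ioi (0:ℝ), h k s * D s) ^ θ * J ^ (1 - θ))) ^ r :=
              ENNReal.rpow_le_rpow (mul_le_mul_right (hHolder k) _) hcr
          _ = (ENNReal.ofReal p) ^ r *
                ((∫⁻ s in Set.Ioi (0:ℝ), h k s * D s) * J ^ (r - 1)) := by
              rw [ENNReal.mul_rpow_of_nonneg _ _ hcr, ENNReal.mul_rpow_of_nonneg _ _ hcr,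
                ← ENNReal.rpow_mul, ← ENNReal.rpow_mul, hθr, ENNReal.rpow_one, hrr]
    _ = (ENNReal.ofReal p) ^ r *
          ((∑' k : ℕ, ∫⁻ s in Set.Ioi (0:ℝ), h k s * D s) * J ^ (r - 1)) := by
        rw [ENNReal.tsum_mul_left, ← ENNReal.tsum_mul_right]
    _ ≤ (ENNReal.ofReal p) ^ r * (J * J ^ (r - 1)) :=
        mul_le_mul_right (mul_le_mul_left hIle _) _
    _ = (lorentzNorm μ p q f) ^ p := by
        rw [hLN, ← ENNReal.rpow_mul]
        have : (1/q) * p = r := by rw [hrdef]; field_simp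
        rw [this, ENNReal.mul_rpow_of_nonneg _ _ hcr]
        congr 1
        rw [show r = 1 + (r - 1) by ring, ENNReal.rpow_add_of_nonneg 1 (r-1)
          zero_le_one (by linarith), ENNReal.rpow_one]
        ring_nf
end
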